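/- Define Ñ(m,s,r) as the maximum, over all point sets y_1,…,y_m ∈ [0,1]^s with property P(r) (no anchored box has ≥ r of the points on its right upper boundary), of the number of distinct sets A ∩ {y_1,…,y_m} as A ranges over anchored boxes in [0,1]^s. Then for r < s and m ≥ 2, Ñ(m,s,r) ≤ Ñ(m−1,s,r) + Ñ(m−1,s−2,r). -/

import Mathlib

open scoped Classical

/-- The closed anchored axis-parallel box `[0,a_1] × ⋯ × [0,a_d]`. -/
def anchoredBox (d : ℕ) (a : Fin d → ℝ) : Set (Fin d → ℝ) :=
  {y | ∀ j, 0 ≤ y j ∧ y j ≤ a j}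

/-- The star-discrepancy of the points `x 1, …, x n` in `[0,1]^d`. -/
noncomputable def starD (d n : ℕ) (x : Fin n → Fin d → ℝ) : ℝ :=
  sSup {t : ℝ | ∃ a : Fin d → ℝ, (∀ j, a j ∈ Set.Icc (0:ℝ) 1) ∧
    t = |((Finset.univ.filter (fun k => x k ∈ anchoredBox d a)).card : ℝ) / n - ∏ j, a j|}

/-- The number of distinct subsets of `{x 1, …, x n}` cut out by anchored boxes. -/
noncomputable def interCount (d n : ℕ) (x : Fin n → Fin d → ℝ) : ℕ :=
  Set.ncard {P : Set (Fin d → ℝ) | ∃ a : Fin d → ℝ,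
    (∀ j, a j ∈ Set.Icc (0:ℝ) 1) ∧ P = anchoredBox d a ∩ Set.range x}

/-- The number of points lying on the right upper boundary of the box `[0,a]`. -/
noncomputable def boundaryCount (d n : ℕ) (x : Fin n → Fin d → ℝ) (a : Fin d → ℝ) : ℕ :=
  (Finset.univ.filter (fun k => x k ∈ anchoredBox d a ∧ ∃ j, x k j = a j)).card

/-- `hatN m s r` : maximal number of distinct subsets cut out by anchored boxes from an
`m`-point set in `[0,1]^s` having property `P(r)` (no anchored box has at least `r` of the
points on its right upper boundary). -/
noncomputable def hatN (m s r : ℕ) : ℕ :=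
  sSup {c : ℕ | ∃ y : Fin m → Fin s → ℝ,
    (∀ k j, y k j ∈ Set.Icc (0:ℝ) 1) ∧
    (∀ a : Fin s → ℝ, (∀ j, a j ∈ Set.Icc (0:ℝ) 1) → boundaryCount s m y a < r) ∧
    c = interCount s m y}

/-! Auxiliary lemmas -/

def traces (d n : ℕ) (x : Fin n → Fin d → ℝ) : Set (Set (Fin d → ℝ)) :=
  {P : Set (Fin d → ℝ) | ∃ a : Fin d → ℝ,
    (∀ j, a j ∈ Set.Icc (0:ℝ) 1) ∧ P = anchoredBox d a ∩ Set.range x}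

lemma traces_subset (d n : ℕ) (x : Fin n → Fin d → ℝ) :
    traces d n x ⊆ {P | P ⊆ Set.range x} := by
  rintro P ⟨a, -, rfl⟩; exact Set.inter_subset_right

lemma traces_finite (d n : ℕ) (x : Fin n → Fin d → ℝ) : (traces d n x).Finite :=
  ((Set.finite_range x).finite_subsets).subset (traces_subset d n x)

lemma interCount_eq (d n : ℕ) (x : Fin n → Fin d → ℝ) :
    interCount d n x = (traces d n x).ncard := rfl

lemma interCount_le_pow (d n : ℕ) (x : Fin n → Fin d → ℝ) : interCount d n x ≤ 2 ^ n := by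
  classical
  have h : interCount d n x ≤ (Set.univ : Set (Finset (Fin n))).ncard := by
    rw [interCount_eq]
    refine Set.ncard_le_ncard_of_injOn (fun P => Finset.univ.filter (fun k => x k ∈ P))
      (fun P _ => Set.mem_univ _) ?_ Set.finite_univ
    intro P hP Q hQ hPQ
    have hkey : ∀ R ∈ traces d n x, ∀ S ∈ traces d n x,
        Finset.univ.filter (fun k => x k ∈ R) = Finset.univ.filter (fun k => x k ∈ S) →
        R ⊆ S := by
      intro R hR S hS h p hp
      obtain ⟨k, rfl⟩ := traces_subset d n x hR hp
      have : k ∈ Finset.univ.filter (fun k => x k ∈ S) := by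
        rw [← h]; exact Finset.mem_filter.mpr ⟨Finset.mem_univ _, hp⟩
      exact (Finset.mem_filter.mp this).2
    exact Set.Subset.antisymm (hkey P hP Q hQ hPQ) (hkey Q hQ P hP hPQ.symm)
  calc interCount d n x ≤ _ := h
    _ = 2 ^ n := by simp [Set.ncard_univ, Nat.card_eq_fintype_card]

lemma hatN_bdd (m s r : ℕ) : BddAbove {c : ℕ | ∃ y : Fin m → Fin s → ℝ,
    (∀ k j, y k j ∈ Set.Icc (0:ℝ) 1) ∧
    (∀ a : Fin s → ℝ, (∀ j, a j ∈ Set.Icc (0:ℝ) 1) → boundaryCount s m y a < r) ∧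
    c = interCount s m y} := by
  refine ⟨2 ^ m, ?_⟩
  rintro c ⟨y, -, -, rfl⟩
  exact interCount_le_pow s m y

lemma le_hatN {m s r : ℕ} (y : Fin m → Fin s → ℝ)
    (h1 : ∀ k j, y k j ∈ Set.Icc (0:ℝ) 1)
    (h2 : ∀ a : Fin s → ℝ, (∀ j, a j ∈ Set.Icc (0:ℝ) 1) → boundaryCount s m y a < r) :
    interCount s m y ≤ hatN m s r :=
  le_csSup (hatN_bdd m s r) ⟨y, h1, h2, rfl⟩

theorem modified_sauer_recursion (m s r : ℕ) (hr : r < s) (hm : 2 ≤ m) :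
    hatN m s r ≤ hatN (m - 1) s r + hatN (m - 1) (s - 2) r := by
  refine csSup_le' ?_
  rintro c ⟨y, hy01, hP, rfl⟩
  -- Step 1: find a point maximal in two coordinates
  obtain ⟨k₀, j1, j2, hj12, hmax1, hmax2⟩ :
      ∃ k₀ : Fin m, ∃ j1 j2 : Fin s, j1 ≠ j2 ∧
        (∀ k, y k j1 ≤ y k₀ j1) ∧ (∀ k, y k j2 ≤ y k₀ j2) := by
    have hmne : (Finset.univ : Finset (Fin m)).Nonempty :=
      ⟨⟨0, by omega⟩, Finset.mem_univ _⟩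
    set b : Fin s → ℝ := fun j => Finset.univ.sup' hmne (fun k => y k j) with hbdef
    have hble : ∀ k j, y k j ≤ b j := fun k j => Finset.le_sup' (fun k => y k j) (Finset.mem_univ k)
    have hb01 : ∀ j, b j ∈ Set.Icc (0:ℝ) 1 := by
      intro j
      constructor
      · exact le_trans (hy01 ⟨0, by omega⟩ j).1 (hble _ j)
      · rw [hbdef]; exact Finset.sup'_le _ _ fun k _ => (hy01 k j).2
    have hcount := hP b hb01
    have hg : ∀ j : Fin s, ∃ k, k ∈ Finset.univ.filter
        (fun k => y k ∈ anchoredBox s b ∧ ∃ j', y k j' = b j') ∧ y k j = b j := by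
      intro j
      obtain ⟨k, -, hk⟩ := Finset.exists_mem_eq_sup' hmne (fun k => y k j)
      refine ⟨k, Finset.mem_filter.mpr ⟨Finset.mem_univ _, ?_, ⟨j, hk.symm⟩⟩, hk.symm⟩
      exact fun j' => ⟨(hy01 k j').1, hble k j'⟩
    choose g hgmem hgeq using hg
    have hcard : (Finset.univ.filter
        (fun k => y k ∈ anchoredBox s b ∧ ∃ j', y k j' = b j')).card
        < (Finset.univ : Finset (Fin s)).card := by
      have h2 : boundaryCount s m y b < r := hcount
      rw [boundaryCount] at h2
      simpa using lt_trans h2 hr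
    obtain ⟨j1, -, j2, -, hne, heq⟩ :=
      Finset.exists_ne_map_eq_of_card_lt_of_maps_to hcard (fun j _ => hgmem j)
    refine ⟨g j1, j1, j2, hne, ?_, ?_⟩
    · intro k; rw [hgeq j1]; exact hble k j1
    · intro k; rw [heq, hgeq j2]; exact hble k j2
  set z : Fin s → ℝ := y k₀ with hzdef
  -- Step 2: the embedding of Fin (m-1) into Fin m avoiding k₀
  set emb : Fin (m - 1) → Fin m :=
    fun k => if h : (k : ℕ) < (k₀ : ℕ) then ⟨k, by omega⟩
      else ⟨(k : ℕ) + 1, by have := k.isLt; omega⟩ with hembdef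
  have hembval : ∀ k : Fin (m-1), ((emb k : Fin m) : ℕ) = if (k : ℕ) < (k₀ : ℕ) then (k : ℕ) else (k : ℕ) + 1 := by
    intro k
    by_cases h : (k : ℕ) < (k₀ : ℕ) <;> simp [hembdef, h]
  have hembne : ∀ k, emb k ≠ k₀ := by
    intro k h
    have := hembval k
    rw [h] at this
    split at this <;> omega
  have hembinj : Function.Injective emb := by
    intro k k' h
    have h1 := hembval k
    have h2 := hembval k'
    rw [h] at h1
    have : (k : ℕ) = (k' : ℕ) := by
      rw [h1] at h2
      split at h2 <;> split at h2 <;> omega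
    exact Fin.ext this
  have hembsurj : ∀ l : Fin m, l ≠ k₀ → ∃ k, emb k = l := by
    intro l hl
    have hlk : (l : ℕ) ≠ (k₀ : ℕ) := fun h => hl (Fin.ext h)
    by_cases h : (l : ℕ) < (k₀ : ℕ)
    · refine ⟨⟨l, by have := k₀.isLt; omega⟩, ?_⟩
      apply Fin.ext
      rw [hembval]
      simp [h]
    · refine ⟨⟨(l : ℕ) - 1, by have := l.isLt; omega⟩, ?_⟩
      apply Fin.ext
      rw [hembval]
      have : ¬ ((⟨(l : ℕ) - 1, by have := l.isLt; omega⟩ : Fin (m-1)) : ℕ) < (k₀ : ℕ) := by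
        simp only [not_lt] at h ⊢; omega
      simp only [this, if_false]
      simp only [not_lt] at h
      omega
  -- the reduced point set
  set y' : Fin (m - 1) → Fin s → ℝ := fun k => y (emb k) with hy'def
  have hy'01 : ∀ k j, y' k j ∈ Set.Icc (0:ℝ) 1 := fun k j => hy01 (emb k) j
  have hP' : ∀ a : Fin s → ℝ, (∀ j, a j ∈ Set.Icc (0:ℝ) 1) →
      boundaryCount s (m - 1) y' a < r := by
    intro a ha
    refine lt_of_le_of_lt ?_ (hP a ha)
    rw [boundaryCount, boundaryCount]
    refine Finset.card_le_card_of_injOn emb ?_ (fun k _ k' _ h => hembinj h)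
    intro k hk
    rw [Finset.mem_coe, Finset.mem_filter] at hk ⊢
    exact ⟨Finset.mem_univ _, hk.2⟩
  have hy'le : interCount s (m - 1) y' ≤ hatN (m - 1) s r := le_hatN y' hy'01 hP'
  by_cases hdup : ∃ l : Fin m, l ≠ k₀ ∧ y l = z
  · -- duplicated point: ranges coincide
    have hrange : Set.range y' = Set.range y := by
      apply Set.Subset.antisymm
      · rintro _ ⟨k, rfl⟩; exact ⟨emb k, rfl⟩
      · rintro _ ⟨l, rfl⟩
        by_cases hl : l = k₀
        · obtain ⟨l', hne, heq⟩ := hdup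
          obtain ⟨k, hk⟩ := hembsurj l' hne
          exact ⟨k, by rw [hy'def]; simp only; rw [hk, heq, hl]⟩
        · obtain ⟨k, hk⟩ := hembsurj l hl
          exact ⟨k, by rw [hy'def]; simp only; rw [hk]⟩
    have : interCount s m y = interCount s (m - 1) y' := by
      rw [interCount, interCount, hrange]
    rw [this]
    exact le_trans hy'le (Nat.le_add_right _ _)
  · -- z occurs only at index k₀
    push_neg at hdup
    have hrange' : Set.range y' = Set.range y \ {z} := by
      apply Set.Subset.antisymm
      · rintro _ ⟨k, rfl⟩
        exact ⟨⟨emb k, rfl⟩, hdup (emb k) (hembne k)⟩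
      · rintro _ ⟨⟨l, rfl⟩, hne⟩
        have hl : l ≠ k₀ := by
          intro h
          apply hne
          rw [h]
          exact Set.mem_singleton_iff.mpr hzdef.symm
        obtain ⟨k, hk⟩ := hembsurj l hl
        exact ⟨k, by rw [hy'def]; simp only; rw [hk]⟩
    have hzrange : z ∈ Set.range y := ⟨k₀, rfl⟩
    -- set identity for removing z from a trace
    have hdiff : ∀ A : Set (Fin s → ℝ), (A ∩ Set.range y) \ {z} = A ∩ Set.range y' := by
      intro A
      rw [hrange']
      ext p
      simp only [Set.mem_diff, Set.mem_inter_iff, Set.mem_singleton_iff]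
      tauto
    set F := traces s m y with hF
    set F' := traces s (m - 1) y' with hF'
    set G2 := {S ∈ F | z ∈ S ∧ S \ {z} ∈ F} with hG2def
    set G1 := F \ G2 with hG1def
    have hsplit : F = G1 ∪ G2 := by
      rw [hG1def, Set.diff_union_of_subset (Set.sep_subset _ _)]
    have hFcard : F.ncard ≤ G1.ncard + G2.ncard := by
      rw [hsplit]; exact Set.ncard_union_le _ _
    -- G1 injects into F'
    have hG1 : G1.ncard ≤ F'.ncard := by
      refine Set.ncard_le_ncard_of_injOn (fun S => S \ {z}) ?_ ?_ (traces_finite _ _ _)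
      · rintro S hS
        obtain ⟨⟨a, ha, rfl⟩, -⟩ := hS
        exact ⟨a, ha, hdiff (anchoredBox s a)⟩
      · rintro S hS S' hS' h
        simp only at h
        by_cases hz : z ∈ S <;> by_cases hz' : z ∈ S'
        · have : S = S \ {z} ∪ {z} := by
            rw [Set.diff_union_self]
            exact (Set.union_eq_self_of_subset_right (Set.singleton_subset_iff.mpr hz)).symm
          rw [this, h]
          rw [Set.diff_union_self]
          exact Set.union_eq_self_of_subset_right (Set.singleton_subset_iff.mpr hz')
        · exfalso
          have hS'eq : S' \ {z} = S' := Set.diff_singleton_eq_self hz'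
          rw [hS'eq] at h
          exact hS.2 ⟨hS.1, hz, by rw [h]; exact hS'.1⟩
        · exfalso
          have hSeq : S \ {z} = S := Set.diff_singleton_eq_self hz
          rw [hSeq] at h
          exact hS'.2 ⟨hS'.1, hz', by rw [← h]; exact hS.1⟩
        · rw [← Set.diff_singleton_eq_self hz, ← Set.diff_singleton_eq_self hz', h]
    -- Step 3: dimension reduction
    have hs2mem : j2 ∈ Finset.univ.erase j1 :=
      Finset.mem_erase.mpr ⟨Ne.symm hj12, Finset.mem_univ _⟩
    set t : Finset (Fin s) := (Finset.univ.erase j1).erase j2 with htdef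
    have htcard : t.card = s - 2 := by
      rw [htdef, Finset.card_erase_of_mem hs2mem, Finset.card_erase_of_mem (Finset.mem_univ _)]
      simp only [Finset.card_univ, Fintype.card_fin]
      omega
    set e := t.orderIsoOfFin htcard with hedef
    set ε : Fin (s - 2) → Fin s := fun i => (e i : Fin s) with hεdef
    have hεt : ∀ i, ε i ∈ t := fun i => (e i).2
    have hcover : ∀ j : Fin s, j = j1 ∨ j = j2 ∨ ∃ i, ε i = j := by
      intro j
      by_cases h1 : j = j1
      · exact Or.inl h1
      by_cases h2 : j = j2
      · exact Or.inr (Or.inl h2)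
      refine Or.inr (Or.inr ?_)
      have hj : j ∈ t := Finset.mem_erase.mpr ⟨h2, Finset.mem_erase.mpr ⟨h1, Finset.mem_univ _⟩⟩
      refine ⟨e.symm ⟨j, hj⟩, ?_⟩
      rw [hεdef]
      simp
    set x' : Fin (m - 1) → Fin (s - 2) → ℝ := fun k i => y' k (ε i) with hx'def
    have hx'01 : ∀ k i, x' k i ∈ Set.Icc (0:ℝ) 1 := fun k i => hy'01 k (ε i)
    have hP'' : ∀ cc : Fin (s - 2) → ℝ, (∀ i, cc i ∈ Set.Icc (0:ℝ) 1) →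
        boundaryCount (s - 2) (m - 1) x' cc < r := by
      intro cc hcc
      set a : Fin s → ℝ := fun j => if h : j ∈ t then cc (e.symm ⟨j, h⟩) else 1 with hadef
      have haε : ∀ i, a (ε i) = cc i := by
        intro i
        rw [hadef]
        simp only
        rw [dif_pos (hεt i)]
        congr 1
        have h1 : (⟨ε i, hεt i⟩ : {x // x ∈ t}) = e i := Subtype.ext rfl
        rw [h1, OrderIso.symm_apply_apply]
      have ha01 : ∀ j, a j ∈ Set.Icc (0:ℝ) 1 := by
        intro j
        rw [hadef]
        simp only
        split
        · exact hcc _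
        · exact ⟨zero_le_one, le_refl 1⟩
      refine lt_of_le_of_lt ?_ (hP a ha01)
      rw [boundaryCount, boundaryCount]
      refine Finset.card_le_card_of_injOn emb ?_ (fun k _ k' _ h => hembinj h)
      intro k hk
      rw [Finset.mem_coe, Finset.mem_filter] at hk ⊢
      obtain ⟨-, hbox, i, hi⟩ := hk
      refine ⟨Finset.mem_univ _, ?_, ⟨ε i, ?_⟩⟩
      · intro j
        refine ⟨(hy01 _ j).1, ?_⟩
        by_cases hjt : j ∈ t
        · have hji' : ε (e.symm ⟨j, hjt⟩) = j := by rw [hεdef]; simp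
          calc y (emb k) j = x' k (e.symm ⟨j, hjt⟩) := by rw [hx'def]; simp only; rw [hji']
            _ ≤ cc (e.symm ⟨j, hjt⟩) := (hbox (e.symm ⟨j, hjt⟩)).2
            _ = a j := by rw [← haε (e.symm ⟨j, hjt⟩), hji']
        · rw [hadef]
          simp only [dif_neg hjt]
          exact (hy01 _ j).2
      · rw [haε]
        exact hi
    have hx'le : interCount (s - 2) (m - 1) x' ≤ hatN (m - 1) (s - 2) r :=
      le_hatN x' hx'01 hP''
    -- the projection
    set π : (Fin s → ℝ) → (Fin (s - 2) → ℝ) := fun v i => v (ε i) with hπdef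
    have hzj1 : ∀ u ∈ Set.range y, u j1 ≤ z j1 := by rintro _ ⟨k, rfl⟩; exact hmax1 k
    have hzj2 : ∀ u ∈ Set.range y, u j2 ≤ z j2 := by rintro _ ⟨k, rfl⟩; exact hmax2 k
    -- the key trace identity
    have hkey : ∀ S, z ∈ S → ∀ a : Fin s → ℝ, S = anchoredBox s a ∩ Set.range y →
        π '' (S \ {z}) = anchoredBox (s - 2) (fun i => a (ε i)) ∩ Set.range x' := by
      intro S hzS a hSa
      have hzbox : z ∈ anchoredBox s a := (hSa ▸ hzS).1
      ext v
      constructor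
      · rintro ⟨u, ⟨huS, huz⟩, rfl⟩
        rw [Set.mem_singleton_iff] at huz
        have hu : u ∈ anchoredBox s a ∩ Set.range y := hSa ▸ huS
        constructor
        · intro i
          exact ⟨(hu.1 (ε i)).1, (hu.1 (ε i)).2⟩
        · have hu' : u ∈ Set.range y' := by
            rw [hrange']
            exact ⟨hu.2, huz⟩
          obtain ⟨k, rfl⟩ := hu'
          exact ⟨k, rfl⟩
      · rintro ⟨hvbox, k, rfl⟩
        have hurange : y' k ∈ Set.range y := ⟨emb k, rfl⟩
        have huz : y' k ≠ z := hdup (emb k) (hembne k)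
        have hubox : y' k ∈ anchoredBox s a := by
          intro j
          refine ⟨(hy'01 k j).1, ?_⟩
          rcases hcover j with h | h | ⟨i, rfl⟩
          · rw [h]
            exact le_trans (hzj1 _ hurange) (hzbox j1).2
          · rw [h]
            exact le_trans (hzj2 _ hurange) (hzbox j2).2
          · exact (hvbox i).2
        refine ⟨y' k, ⟨?_, ?_⟩, rfl⟩
        · rw [hSa]; exact ⟨hubox, hurange⟩
        · rw [Set.mem_singleton_iff]; exact huz
    -- G2 injects into the traces of the projected points
    have hG2 : G2.ncard ≤ (traces (s - 2) (m - 1) x').ncard := by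
      refine Set.ncard_le_ncard_of_injOn (fun S => π '' (S \ {z})) ?_ ?_ (traces_finite _ _ _)
      · rintro S ⟨⟨a, ha, hSa⟩, hzS, -⟩
        exact ⟨fun i => a (ε i), fun i => ha (ε i), hkey S hzS a hSa⟩
      · intro S hS S' hS' h
        simp only at h
        obtain ⟨⟨a, ha, hSa⟩, hzS, -⟩ := hS
        obtain ⟨⟨a', ha', hS'a⟩, hzS', -⟩ := hS'
        have hsub : ∀ (T T' : Set (Fin s → ℝ)) (aT : Fin s → ℝ),
            z ∈ T' → T' = anchoredBox s aT ∩ Set.range y →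
            T ⊆ Set.range y →
            π '' (T \ {z}) = π '' (T' \ {z}) → T ⊆ T' := by
          intro T T' aT hzT' hT'a hTr hππ u huT
          by_cases huz : u = z
          · rw [huz]; exact hzT'
          · have hπu : π u ∈ π '' (T' \ {z}) := by
              rw [← hππ]
              exact ⟨u, ⟨huT, fun hc => huz (Set.mem_singleton_iff.mp hc)⟩, rfl⟩
            obtain ⟨u', ⟨hu'T', -⟩, hπu'⟩ := hπu
            have hu'box : u' ∈ anchoredBox s aT := (hT'a ▸ hu'T').1
            have hzbox' : z ∈ anchoredBox s aT := (hT'a ▸ hzT').1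
            have hur : u ∈ Set.range y := hTr huT
            have h0 : ∀ j', 0 ≤ u j' := by
              obtain ⟨ku, hku⟩ := hur
              intro j'
              rw [← hku]
              exact (hy01 ku j').1
            have hubox : u ∈ anchoredBox s aT := by
              intro j
              refine ⟨h0 j, ?_⟩
              rcases hcover j with hj | hj | ⟨i, rfl⟩
              · rw [hj]
                exact le_trans (hzj1 u hur) (hzbox' j1).2
              · rw [hj]
                exact le_trans (hzj2 u hur) (hzbox' j2).2
              · have : u (ε i) = u' (ε i) := by
                  have := congrFun hπu' i
                  rw [hπdef] at this
                  exact this.symm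
                rw [this]
                exact (hu'box (ε i)).2
            rw [hT'a]
            exact ⟨hubox, hur⟩
        have hTr : S ⊆ Set.range y := by rw [hSa]; exact Set.inter_subset_right
        have hTr' : S' ⊆ Set.range y := by rw [hS'a]; exact Set.inter_subset_right
        exact Set.Subset.antisymm (hsub S S' a' hzS' hS'a hTr h) (hsub S' S a hzS hSa hTr' h.symm)
    -- assemble
    calc interCount s m y = F.ncard := by rw [interCount_eq, hF]
      _ ≤ G1.ncard + G2.ncard := hFcard
      _ ≤ F'.ncard + (traces (s - 2) (m - 1) x').ncard := Nat.add_le_add hG1 hG2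
      _ = interCount s (m - 1) y' + interCount (s - 2) (m - 1) x' := by
          rw [interCount_eq, interCount_eq, hF']
      _ ≤ hatN (m - 1) s r + hatN (m - 1) (s - 2) r := Nat.add_le_add hy'le hx'le
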